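/- For vectors z, w in R^l with the second-order cone K^l = {x = (x_0, x_bullet) in R × R^{l-1} : x_0 ≥ ‖x_bullet‖}, one has: z, w ∈ K^l and ⟨z,w⟩ = 0 if and only if z, w ∈ K^l and z ∘ w = 0, where z ∘ w := (⟨z,w⟩, w_0 z_bullet + z_0 w_bullet) is the Jordan product. -/

import Mathlib

/-- The second-order cone `K^{k+1} ⊆ ℝ^{k+1}`, with head component at index `0`. -/
def soc (k : ℕ) : Set (EuclideanSpace ℝ (Fin (k + 1))) :=
  {x | Real.sqrt (∑ j : Fin k, x j.succ ^ 2) ≤ x 0}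

/-- The Jordan product `z ∘ w = (⟨z,w⟩, w₀ z_• + z₀ w_•)`. -/
noncomputable def jordan {k : ℕ} (z w : EuclideanSpace ℝ (Fin (k + 1))) :
    EuclideanSpace ℝ (Fin (k + 1)) :=
  WithLp.toLp 2 (fun idx => Fin.cases (∑ i, z i * w i) (fun j => w 0 * z j.succ + z 0 * w j.succ) idx)

theorem soc_complementarity_iff_jordan {k : ℕ} (z w : EuclideanSpace ℝ (Fin (k + 1))) :
    (z ∈ soc k ∧ w ∈ soc k ∧ ∑ i, z i * w i = 0) ↔
      (z ∈ soc k ∧ w ∈ soc k ∧ jordan z w = 0) := by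
  constructor
  · rintro ⟨hz, hw, hzw⟩
    refine ⟨hz, hw, ?_⟩
    have hz' : Real.sqrt (∑ j : Fin k, z j.succ ^ 2) ≤ z 0 := hz
    have hw' : Real.sqrt (∑ j : Fin k, w j.succ ^ 2) ≤ w 0 := hw
    have hz0 : (0:ℝ) ≤ z 0 := le_trans (Real.sqrt_nonneg _) hz'
    have hw0 : (0:ℝ) ≤ w 0 := le_trans (Real.sqrt_nonneg _) hw'
    have hA : ∑ j : Fin k, z j.succ ^ 2 ≤ z 0 ^ 2 := by
      calc ∑ j : Fin k, z j.succ ^ 2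
          = Real.sqrt (∑ j : Fin k, z j.succ ^ 2) ^ 2 :=
            (Real.sq_sqrt (Finset.sum_nonneg fun j _ => sq_nonneg _)).symm
        _ ≤ z 0 ^ 2 := pow_le_pow_left₀ (Real.sqrt_nonneg _) hz' 2
    have hB : ∑ j : Fin k, w j.succ ^ 2 ≤ w 0 ^ 2 := by
      calc ∑ j : Fin k, w j.succ ^ 2
          = Real.sqrt (∑ j : Fin k, w j.succ ^ 2) ^ 2 :=
            (Real.sq_sqrt (Finset.sum_nonneg fun j _ => sq_nonneg _)).symm
        _ ≤ w 0 ^ 2 := pow_le_pow_left₀ (Real.sqrt_nonneg _) hw' 2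
    have hC : ∑ j : Fin k, z j.succ * w j.succ = -(z 0 * w 0) := by
      have h := hzw
      rw [Fin.sum_univ_succ] at h
      linarith
    have hS : ∑ j : Fin k, (w 0 * z j.succ + z 0 * w j.succ) ^ 2 ≤ 0 := by
      have expand : ∑ j : Fin k, (w 0 * z j.succ + z 0 * w j.succ) ^ 2
          = w 0 ^ 2 * ∑ j : Fin k, z j.succ ^ 2 + z 0 ^ 2 * ∑ j : Fin k, w j.succ ^ 2
            + 2 * (z 0 * w 0) * ∑ j : Fin k, z j.succ * w j.succ := by
        rw [Finset.mul_sum, Finset.mul_sum, Finset.mul_sum,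
          ← Finset.sum_add_distrib, ← Finset.sum_add_distrib]
        exact Finset.sum_congr rfl fun j _ => by ring
      rw [expand, hC]
      nlinarith [mul_le_mul_of_nonneg_left hA (sq_nonneg (w 0)),
        mul_le_mul_of_nonneg_left hB (sq_nonneg (z 0))]
    have hall : ∀ j : Fin k, w 0 * z j.succ + z 0 * w j.succ = 0 := by
      intro j
      have hSz : ∑ j : Fin k, (w 0 * z j.succ + z 0 * w j.succ) ^ 2 = 0 :=
        le_antisymm hS (Finset.sum_nonneg fun i _ => sq_nonneg _)
      have := (Finset.sum_eq_zero_iff_of_nonneg fun i _ => sq_nonneg _).1 hSz j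
        (Finset.mem_univ j)
      exact pow_eq_zero_iff (two_ne_zero) |>.1 this
    ext idx
    induction idx using Fin.cases with
    | zero => simpa [jordan] using hzw
    | succ j => simpa [jordan] using hall j
  · rintro ⟨hz, hw, hj⟩
    refine ⟨hz, hw, ?_⟩
    have h0 := congrFun (congrArg WithLp.ofLp hj) 0
    simpa [jordan] using h0
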